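/- Let δ ≥ 2, let n be divisible by δ+1 with n ≥ δ+1, and let q ≥ δ+1. Then the number of proper q-colorings of G_1 satisfies hom(G_1, K_q) = q(q−1)⋯(q−δ) · [(q−1)·(q−1)(q−2)⋯(q−δ)]^{n/(δ+1)−1}, i.e., hom(G_1,K_q) = (∏_{i=0}^{δ}(q−i)) · ((q−1)·∏_{i=1}^{δ}(q−i))^{n/(δ+1)−1}. -/

import Mathlib

open Function Finset

/-- The number of `H`-colorings of a simple graph `G`, where the target graph (with loops
allowed) is given by a symmetric adjacency relation `H` on its vertex type. -/
noncomputable def homCount {α β : Type*} (G : SimpleGraph α) (H : β → β → Prop) : ℕ :=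
  Nat.card {f : α → β // ∀ ⦃u v⦄, G.Adj u v → H (f u) (f v)}

/-- The graph `G₁` on `m * (δ+1)` vertices: `m` disjoint copies of `K_{δ+1}` (the copy `a`
has vertex set `{a} × Fin (δ+1)`), together with the edges of a star on the specified
vertices `(a, 0)`, centered at the specified vertex `(0, 0)` of the first copy. -/
def G1 (m δ : ℕ) : SimpleGraph (Fin m × Fin (δ + 1)) :=
  SimpleGraph.fromRel fun x y => x.1 = y.1 ∨ (x.2 = 0 ∧ y.2 = 0 ∧ (x.1 : ℕ) = 0)

/-- Embeddings of `Fin (δ+1)` with a prescribed value at `0` correspond to embeddings of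
`Fin δ` into the complement of that value. -/
def embFixedEquiv (δ q : ℕ) (c : Fin q) :
    {e : Fin (δ + 1) ↪ Fin q // e 0 = c} ≃ (Fin δ ↪ {x : Fin q // x ≠ c}) where
  toFun e := ⟨fun j => ⟨e.1 j.succ, fun h => Fin.succ_ne_zero j
      (e.1.injective (h.trans e.2.symm))⟩,
    fun j k h => Fin.succ_injective _ (e.1.injective (congrArg Subtype.val h))⟩
  invFun e := ⟨⟨Fin.cons c fun j => (e j).1, by
      rw [Fin.cons_injective_iff]
      refine ⟨?_, fun j k h => e.injective (Subtype.ext h)⟩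
      rintro ⟨j, hj⟩
      exact (e j).2 hj⟩, by simp⟩
  left_inv e := by
    apply Subtype.ext
    apply DFunLike.ext
    intro j
    refine Fin.cases ?_ (fun k => ?_) j
    · simpa using e.2.symm
    · simp
      rfl
  right_inv e := by
    apply DFunLike.ext
    intro j
    apply Subtype.ext
    simp

lemma card_restCol (δ q : ℕ) (hq : 1 ≤ q) (c : Fin q) :
    Nat.card {g : Fin (δ + 1) → Fin q // Injective g ∧ g 0 ≠ c} =
      (q - 1) * (q - 1).descFactorial δ := by
  classical
  have e1 : {g : Fin (δ + 1) → Fin q // Injective g ∧ g 0 ≠ c} ≃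
      {e : Fin (δ + 1) ↪ Fin q // ¬ (e 0 = c)} :=
    { toFun := fun g => ⟨⟨g.1, g.2.1⟩, g.2.2⟩
      invFun := fun e => ⟨e.1, e.1.injective, e.2⟩
      left_inv := fun _ => rfl
      right_inv := fun _ => rfl }
  have hfix : Fintype.card {e : Fin (δ + 1) ↪ Fin q // e 0 = c} =
      (q - 1).descFactorial δ := by
    rw [← Nat.card_eq_fintype_card, Nat.card_congr (embFixedEquiv δ q c),
      Nat.card_eq_fintype_card, Fintype.card_embedding_eq]
    congr 1
    · simp [Fintype.card_subtype_compl]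
    · simp
  rw [Nat.card_congr e1, Nat.card_eq_fintype_card,
    Fintype.card_subtype_compl, hfix, Fintype.card_embedding_eq]
  simp only [Fintype.card_fin]
  obtain ⟨p, rfl⟩ : ∃ p, q = p + 1 := ⟨q - 1, by omega⟩
  rw [Nat.succ_descFactorial_succ]
  simp only [Nat.add_sub_cancel]
  cases h : p.descFactorial δ with
  | zero => simp
  | succ k => ring_nf; omega

lemma cond_iff (m δ q : ℕ) [NeZero m] (f : Fin m × Fin (δ + 1) → Fin q) :
    (∀ ⦃u v⦄, (G1 m δ).Adj u v → f u ≠ f v) ↔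
      ((∀ a : Fin m, Injective fun j => f (a, j)) ∧
        ∀ a : Fin m, a ≠ 0 → f (a, 0) ≠ f (0, 0)) := by
  constructor
  · intro H
    refine ⟨fun a j k hjk => ?_, fun a ha => ?_⟩
    · by_contra hne
      exact H (u := (a, j)) (v := (a, k)) (by
        rw [G1, SimpleGraph.fromRel_adj]
        exact ⟨by simp [hne], Or.inl (Or.inl rfl)⟩) hjk
    · exact H (u := (a, 0)) (v := (0, 0)) (by
        rw [G1, SimpleGraph.fromRel_adj]
        exact ⟨by simp [ha], Or.inr (Or.inr ⟨rfl, rfl, by simp⟩)⟩)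
  · rintro ⟨h1, h2⟩ ⟨a, i⟩ ⟨b, j⟩ hadj
    rw [G1, SimpleGraph.fromRel_adj] at hadj
    obtain ⟨hne, hr⟩ := hadj
    rcases hr with (hab | ⟨hi, hj, ha⟩) | (hab | ⟨hj, hi, hb⟩)
    · subst hab
      intro h
      exact hne (by rw [h1 a h])
    · simp only at hi hj ha
      subst hi; subst hj
      have ha' : a = 0 := Fin.ext (by simpa using ha)
      subst ha'
      have hb : b ≠ 0 := fun h => hne (by rw [h])
      exact (h2 b hb).symm
    · simp only at hab
      subst hab
      intro h
      exact hne (by rw [h1 _ h])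
    · simp only at hi hj hb
      subst hi; subst hj
      have hb' : b = 0 := Fin.ext (by simpa using hb)
      subst hb'
      have ha : a ≠ 0 := fun h => hne (by rw [h])
      exact h2 a ha

/-- Decomposition of the colorings of `G1`. -/
noncomputable def colEquiv (m δ q : ℕ) [NeZero m] :
    {f : Fin m × Fin (δ + 1) → Fin q // ∀ ⦃u v⦄, (G1 m δ).Adj u v → f u ≠ f v} ≃
      Σ g : {g : Fin (δ + 1) → Fin q // Injective g},
        (∀ _a : {a : Fin m // a ≠ 0},
          {h : Fin (δ + 1) → Fin q // Injective h ∧ h 0 ≠ g.1 0}) where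
  toFun f :=
    ⟨⟨fun j => f.1 (0, j), ((cond_iff m δ q f.1).1 f.2).1 0⟩,
      fun a => ⟨fun j => f.1 (a.1, j), ((cond_iff m δ q f.1).1 f.2).1 a.1,
        ((cond_iff m δ q f.1).1 f.2).2 a.1 a.2⟩⟩
  invFun gh :=
    ⟨fun p => if ha : p.1 = 0 then gh.1.1 p.2 else (gh.2 ⟨p.1, ha⟩).1 p.2, by
      rw [cond_iff]
      constructor
      · intro a
        by_cases ha : a = 0
        · subst ha; simpa using gh.1.2
        · simpa [ha] using (gh.2 ⟨a, ha⟩).2.1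
      · intro a ha
        simpa [ha] using (gh.2 ⟨a, ha⟩).2.2⟩
  left_inv f := by
    apply Subtype.ext
    funext ⟨a, j⟩
    by_cases ha : a = 0
    · subst ha; simp
    · simp [ha]
  right_inv gh := by
    obtain ⟨g, h⟩ := gh
    have key : ∀ (g' : {g : Fin (δ + 1) → Fin q // Injective g})
        (h' : ∀ _a : {a : Fin m // a ≠ 0},
          {h : Fin (δ + 1) → Fin q // Injective h ∧ h 0 ≠ g'.1 0}),
        g' = g → (∀ a, (h' a).1 = (h a).1) →
        (⟨g', h'⟩ : Σ g : {g : Fin (δ + 1) → Fin q // Injective g},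
          (∀ _a : {a : Fin m // a ≠ 0},
            {h : Fin (δ + 1) → Fin q // Injective h ∧ h 0 ≠ g.1 0})) = ⟨g, h⟩ := by
      rintro g' h' rfl hh
      exact congrArg _ (funext fun a => Subtype.ext (hh a))
    exact key _ _ (Subtype.ext (funext fun j => by simp))
      (fun a => funext fun j => by simp [a.2])

theorem homCount_G1_eq (δ n q : ℕ) (hδ : 2 ≤ δ) (hdvd : (δ + 1) ∣ n) (hn : δ + 1 ≤ n)
    (hq : δ + 1 ≤ q) :
    homCount (G1 (n / (δ + 1)) δ) (fun a b : Fin q => a ≠ b) =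
      (∏ i ∈ Finset.range (δ + 1), (q - i)) *
        ((q - 1) * ∏ i ∈ Finset.Icc 1 δ, (q - i)) ^ (n / (δ + 1) - 1) := by
  classical
  set m := n / (δ + 1) with hmdef
  have hm : 1 ≤ m := (Nat.one_le_div_iff (by omega)).2 hn
  haveI : NeZero m := ⟨by omega⟩
  rw [homCount, Nat.card_congr (colEquiv m δ q), Nat.card_eq_fintype_card,
    Fintype.card_sigma]
  have hfiber : ∀ g : {g : Fin (δ + 1) → Fin q // Injective g},
      Fintype.card (∀ _a : {a : Fin m // a ≠ 0},
        {h : Fin (δ + 1) → Fin q // Injective h ∧ h 0 ≠ g.1 0}) =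
      ((q - 1) * (q - 1).descFactorial δ) ^ (m - 1) := by
    intro g
    rw [← Nat.card_eq_fintype_card, Nat.card_pi]
    simp_rw [card_restCol δ q (by omega) (g.1 0)]
    rw [Finset.prod_const, Finset.card_univ]
    congr 1
    simp [Fintype.card_subtype_compl]
  simp_rw [hfiber]
  rw [Finset.sum_const, Finset.card_univ, smul_eq_mul]
  have hE : Fintype.card {g : Fin (δ + 1) → Fin q // Injective g} =
      q.descFactorial (δ + 1) := by
    rw [← Nat.card_eq_fintype_card,
      Nat.card_congr (Equiv.subtypeInjectiveEquivEmbedding _ _),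
      Nat.card_eq_fintype_card, Fintype.card_embedding_eq]
    simp
  have hIcc : ∏ i ∈ Finset.Icc 1 δ, (q - i) = (q - 1).descFactorial δ := by
    rw [Nat.descFactorial_eq_prod_range, ← Finset.Ico_add_one_right_eq_Icc,
      Finset.prod_Ico_eq_prod_range]
    refine Finset.prod_congr (by simp) fun i _ => by omega
  rw [hE, hIcc, Nat.descFactorial_eq_prod_range]
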